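/- Let n, m ∈ ℝ³ be unit vectors with ‖n − m‖ ≤ ε for some 0 < ε ≤ 1, and set P = id − n⊗n and Q = id − m⊗m. Let B : ℝ³ → ℝ³ be a linear map with ‖B − Q∘P‖ ≤ ε² and let J ∈ ℝ with |J − 1| ≤ ε². Then ‖B∘B* − J·Q‖ ≤ 8ε², where B* denotes the adjoint of B and all norms are operator norms induced by the Euclidean norm. -/

import Mathlib

/-- The rank-one operator `a ⊗ b : x ↦ ⟨b, x⟩ • a` on a real inner product space. -/
noncomputable def tensorCLM {E : Type*} [NormedAddCommGroup E] [InnerProductSpace ℝ E]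
    (a b : E) : E →L[ℝ] E :=
  (innerSL ℝ b).smulRight a

section Helpers
variable {E : Type*} [NormedAddCommGroup E] [InnerProductSpace ℝ E]

local notation "⟪" x ", " y "⟫" => @inner ℝ _ _ x y

lemma tensorCLM_apply (a b x : E) : tensorCLM a b x = ⟪b, x⟫ • a := rfl

lemma norm_tensorCLM_le (a b : E) : ‖tensorCLM a b‖ ≤ ‖a‖ * ‖b‖ := by
  refine ContinuousLinearMap.opNorm_le_bound _ (by positivity) fun x => ?_
  rw [tensorCLM_apply, norm_smul, Real.norm_eq_abs]
  calc |⟪b, x⟫| * ‖a‖ ≤ (‖b‖ * ‖x‖) * ‖a‖ := by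
        gcongr; exact abs_real_inner_le_norm b x
    _ = ‖a‖ * ‖b‖ * ‖x‖ := by ring

lemma comp_tensorCLM (T : E →L[ℝ] E) (a b : E) :
    T ∘L tensorCLM a b = tensorCLM (T a) b := by
  ext x; simp [tensorCLM_apply, map_smul]

lemma tensorCLM_comp [CompleteSpace E] (T : E →L[ℝ] E) (a b : E) :
    tensorCLM a b ∘L T = tensorCLM a (ContinuousLinearMap.adjoint T b) := by
  ext x
  simp only [ContinuousLinearMap.comp_apply, tensorCLM_apply]
  rw [ContinuousLinearMap.adjoint_inner_left]

lemma adjoint_tensorCLM [CompleteSpace E] (a b : E) :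
    ContinuousLinearMap.adjoint (tensorCLM a b) = tensorCLM b a := by
  symm
  rw [ContinuousLinearMap.eq_adjoint_iff]
  intro x y
  simp only [tensorCLM_apply, real_inner_smul_left, real_inner_smul_right]
  rw [real_inner_comm x a, mul_comm]

lemma norm_one_sub_tensorCLM_le (m : E) (hm : ‖m‖ = 1) :
    ‖(1 : E →L[ℝ] E) - tensorCLM m m‖ ≤ 1 := by
  refine ContinuousLinearMap.opNorm_le_bound _ zero_le_one fun x => ?_
  have h1 : ((1 : E →L[ℝ] E) - tensorCLM m m) x = x - ⟪m, x⟫ • m := rfl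
  rw [h1, one_mul]
  have h2 : ‖x - ⟪m, x⟫ • m‖ ^ 2 = ‖x‖ ^ 2 - ⟪m, x⟫ ^ 2 := by
    rw [norm_sub_sq_real, real_inner_smul_right, norm_smul, Real.norm_eq_abs,
      real_inner_comm x m, hm, mul_one, sq_abs]
    ring
  nlinarith [norm_nonneg (x - ⟪m, x⟫ • m), norm_nonneg x, sq_nonneg (⟪m, x⟫)]

lemma proj_idem (m : E) (hm : ‖m‖ = 1) :
    ((1 : E →L[ℝ] E) - tensorCLM m m) ∘L ((1 : E →L[ℝ] E) - tensorCLM m m)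
      = (1 : E →L[ℝ] E) - tensorCLM m m := by
  have h : tensorCLM m m ∘L tensorCLM m m = tensorCLM m m := by
    ext x
    simp only [ContinuousLinearMap.comp_apply, tensorCLM_apply, real_inner_smul_right,
      map_smul, smul_smul]
    rw [real_inner_self_eq_norm_sq, hm]
    ring_nf
  calc ((1 : E →L[ℝ] E) - tensorCLM m m) ∘L ((1 : E →L[ℝ] E) - tensorCLM m m)
      = 1 - tensorCLM m m - tensorCLM m m + tensorCLM m m ∘L tensorCLM m m := by
        simp only [ContinuousLinearMap.comp_sub, ContinuousLinearMap.sub_comp,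
          ContinuousLinearMap.comp_id, ContinuousLinearMap.id_comp,
          ContinuousLinearMap.one_def]
        abel
    _ = 1 - tensorCLM m m := by rw [h]; abel

end Helpers

set_option maxHeartbeats 1000000 in
/-- Let `n, m ∈ ℝ³` be unit vectors with `‖n - m‖ ≤ ε` for some `0 < ε ≤ 1`, and set
`P = id - n⊗n` and `Q = id - m⊗m`. Let `B : ℝ³ → ℝ³` be a linear map with
`‖B - Q ∘ P‖ ≤ ε²` and let `J ∈ ℝ` with `|J - 1| ≤ ε²`. Then `‖B ∘ B* - J • Q‖ ≤ 8 ε²`,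
where `B*` denotes the adjoint of `B` and all norms are operator norms induced by the
Euclidean norm. -/
theorem surface_quadrature_matrix_bound
    (n m : EuclideanSpace ℝ (Fin 3)) (hn : ‖n‖ = 1) (hm : ‖m‖ = 1)
    (ε : ℝ) (hε0 : 0 < ε) (hε1 : ε ≤ 1) (hnm : ‖n - m‖ ≤ ε)
    (B : EuclideanSpace ℝ (Fin 3) →L[ℝ] EuclideanSpace ℝ (Fin 3))
    (hB : ‖B - ((1 : EuclideanSpace ℝ (Fin 3) →L[ℝ] EuclideanSpace ℝ (Fin 3)) - tensorCLM m m) ∘L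
        ((1 : EuclideanSpace ℝ (Fin 3) →L[ℝ] EuclideanSpace ℝ (Fin 3)) - tensorCLM n n)‖ ≤ ε ^ 2)
    (J : ℝ) (hJ : |J - 1| ≤ ε ^ 2) :
    ‖B ∘L ContinuousLinearMap.adjoint B -
        J • ((1 : EuclideanSpace ℝ (Fin 3) →L[ℝ] EuclideanSpace ℝ (Fin 3)) - tensorCLM m m)‖ ≤
      8 * ε ^ 2 := by
  set Q : EuclideanSpace ℝ (Fin 3) →L[ℝ] EuclideanSpace ℝ (Fin 3) := 1 - tensorCLM m m with hQdef
  set P : EuclideanSpace ℝ (Fin 3) →L[ℝ] EuclideanSpace ℝ (Fin 3) := 1 - tensorCLM n n with hPdef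
  set Er : EuclideanSpace ℝ (Fin 3) →L[ℝ] EuclideanSpace ℝ (Fin 3) := B - Q ∘L P with hErdef
  set Er' : EuclideanSpace ℝ (Fin 3) →L[ℝ] EuclideanSpace ℝ (Fin 3) := ContinuousLinearMap.adjoint Er with hEr'def
  clear_value Q P Er Er'
  have hone : ContinuousLinearMap.adjoint
      (1 : EuclideanSpace ℝ (Fin 3) →L[ℝ] EuclideanSpace ℝ (Fin 3)) = 1 := by
    rw [ContinuousLinearMap.one_def, ContinuousLinearMap.adjoint_id]
  have hQadj : ContinuousLinearMap.adjoint Q = Q := by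
    rw [hQdef, map_sub, adjoint_tensorCLM, hone]
  have hPadj : ContinuousLinearMap.adjoint P = P := by
    rw [hPdef, map_sub, adjoint_tensorCLM, hone]
  have hQQ : Q * Q = Q := by rw [hQdef]; exact proj_idem m hm
  have hPP : P * P = P := by rw [hPdef]; exact proj_idem n hn
  have hBeq : B = Q ∘L P + Er := by rw [hErdef]; abel
  have hadjB : ContinuousLinearMap.adjoint B = P * Q + Er' := by
    rw [hBeq, map_add, ContinuousLinearMap.adjoint_comp, hPadj, hQadj, hEr'def]
    rfl
  have hQT : Q * tensorCLM n n * Q = tensorCLM (Q n) (Q n) := by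
    have e1 : Q ∘L tensorCLM n n = tensorCLM (Q n) n := comp_tensorCLM Q n n
    have e2 : tensorCLM (Q n) n ∘L Q = tensorCLM (Q n) (ContinuousLinearMap.adjoint Q n) :=
      tensorCLM_comp Q (Q n) n
    show (Q ∘L tensorCLM n n) ∘L Q = _
    rw [e1, e2, hQadj]
  have hQPQ : Q * P * Q = Q - tensorCLM (Q n) (Q n) := by
    rw [hPdef, mul_sub, mul_one, sub_mul, hQQ, hQT]
  have key : B * ContinuousLinearMap.adjoint B
      = Q * (P * P) * Q + (Q * P * Er' + Er * (P * Q) + Er * Er') := by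
    rw [hadjB]
    nth_rewrite 1 [hBeq]
    show (Q * P + Er) * (P * Q + Er') = _
    noncomm_ring
  have keyeq : B ∘L ContinuousLinearMap.adjoint B - J • Q
      = ((1 - J) • Q - tensorCLM (Q n) (Q n))
        + (Q * P * Er' + Er * (P * Q) + Er * Er') := by
    have h : B ∘L ContinuousLinearMap.adjoint B
        = (Q - tensorCLM (Q n) (Q n)) + (Q * P * Er' + Er * (P * Q) + Er * Er') := by
      show B * ContinuousLinearMap.adjoint B = _
      rw [key, hPP, hQPQ]
    rw [h]
    module
  have hQnorm : ‖Q‖ ≤ 1 := by rw [hQdef]; exact norm_one_sub_tensorCLM_le m hm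
  have hPnorm : ‖P‖ ≤ 1 := by rw [hPdef]; exact norm_one_sub_tensorCLM_le n hn
  have hErn : ‖Er‖ ≤ ε ^ 2 := hB
  have hEr'n : ‖Er'‖ ≤ ε ^ 2 := by
    rw [hEr'def, LinearIsometryEquiv.norm_map]; exact hErn
  have hQm : Q m = 0 := by
    have : Q m = m - (inner ℝ m m : ℝ) • m := by
      rw [hQdef]; rfl
    rw [this, real_inner_self_eq_norm_sq, hm]
    simp
  have hQn : ‖Q n‖ ≤ ε := by
    have h : Q n = Q (n - m) := by rw [map_sub, hQm, sub_zero]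
    calc ‖Q n‖ = ‖Q (n - m)‖ := by rw [h]
      _ ≤ ‖Q‖ * ‖n - m‖ := Q.le_opNorm _
      _ ≤ 1 * ε := by
          apply mul_le_mul hQnorm hnm (norm_nonneg _) zero_le_one
      _ = ε := one_mul ε
  have b1 : ‖(1 - J) • Q‖ ≤ ε ^ 2 := by
    have h1 := ContinuousLinearMap.opNorm_smul_le (1 - J) Q
    rw [Real.norm_eq_abs, abs_sub_comm] at h1
    refine h1.trans ?_
    calc |J - 1| * ‖Q‖ ≤ ε ^ 2 * 1 :=
          mul_le_mul hJ hQnorm (norm_nonneg _) (by positivity)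
      _ = ε ^ 2 := mul_one _
  have b2 : ‖tensorCLM (Q n) (Q n)‖ ≤ ε ^ 2 := by
    refine (norm_tensorCLM_le _ _).trans ?_
    nlinarith [norm_nonneg (Q n)]
  have b3 : ‖Q * P * Er'‖ ≤ ε ^ 2 := by
    have h1 : ‖Q * P * Er'‖ ≤ ‖Q‖ * ‖P‖ * ‖Er'‖ :=
      (norm_mul_le _ _).trans (mul_le_mul_of_nonneg_right (norm_mul_le _ _) (norm_nonneg _))
    calc ‖Q * P * Er'‖ ≤ ‖Q‖ * ‖P‖ * ‖Er'‖ := h1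
      _ ≤ 1 * 1 * ε ^ 2 :=
          mul_le_mul (mul_le_mul hQnorm hPnorm (norm_nonneg _) zero_le_one) hEr'n
            (norm_nonneg _) (by norm_num)
      _ = ε ^ 2 := by ring
  have b4 : ‖Er * (P * Q)‖ ≤ ε ^ 2 := by
    have h1 : ‖Er * (P * Q)‖ ≤ ‖Er‖ * (‖P‖ * ‖Q‖) :=
      (norm_mul_le _ _).trans (mul_le_mul_of_nonneg_left (norm_mul_le _ _) (norm_nonneg _))
    calc ‖Er * (P * Q)‖ ≤ ‖Er‖ * (‖P‖ * ‖Q‖) := h1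
      _ ≤ ε ^ 2 * (1 * 1) :=
          mul_le_mul hErn (mul_le_mul hPnorm hQnorm (norm_nonneg _) zero_le_one)
            (by positivity) (sq_nonneg ε)
      _ = ε ^ 2 := by ring
  have b5 : ‖Er * Er'‖ ≤ ε ^ 2 := by
    have h1 : ‖Er * Er'‖ ≤ ‖Er‖ * ‖Er'‖ := norm_mul_le _ _
    have h2 : ε ^ 2 ≤ 1 := by nlinarith
    calc ‖Er * Er'‖ ≤ ‖Er‖ * ‖Er'‖ := h1
      _ ≤ ε ^ 2 * ε ^ 2 := mul_le_mul hErn hEr'n (norm_nonneg _) (sq_nonneg ε)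
      _ ≤ 1 * ε ^ 2 := mul_le_mul_of_nonneg_right h2 (sq_nonneg ε)
      _ = ε ^ 2 := one_mul _
  rw [keyeq]
  have tri : ‖((1 - J) • Q - tensorCLM (Q n) (Q n))
      + (Q * P * Er' + Er * (P * Q) + Er * Er')‖
      ≤ (‖(1 - J) • Q‖ + ‖tensorCLM (Q n) (Q n)‖)
        + (‖Q * P * Er'‖ + ‖Er * (P * Q)‖ + ‖Er * Er'‖) := by
    refine (norm_add_le _ _).trans (add_le_add (norm_sub_le _ _) norm_add₃_le)
  refine tri.trans ?_
  have hε2 : (0:ℝ) ≤ ε ^ 2 := sq_nonneg ε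
  linarith [b1, b2, b3, b4, b5]
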